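/- Let n, L, h be integers with 1 ≤ h ≤ L ≤ n. Let X = θ + ε with θ ∈ Θ_L deterministic and ε a random vector with E[ε_i] = 0, E[ε_i²] < ∞, and Cov(ε_i, ε_j) = γ_{|i-j|}. Define T_h = Σ_{i=1}^{n} (X_i − X_{i+h})² and W(θ) = Σ_{i=1}^{n} (θ_i − θ_{i+1})², with all indices taken modulo n. Then E[T_h] = h·W(θ) + 2n·γ_0 − 2(n−h)·γ_h − 2h·γ_{n-h}. -/

import Mathlib

open MeasureTheory Finset

/-- `Θ_L`: the set of piecewise-constant vectors in `ℝⁿ` all of whose constant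
segments have length at least `L`. -/
def ThetaSet (n L : ℕ) : Set (Fin n → ℝ) :=
  {θ | ∃ (k : ℕ) (t : ℕ → ℕ) (c : ℕ → ℝ),
    0 < k ∧ t 0 = 0 ∧ t k = n ∧
    (∀ j < k, t j + L ≤ t (j + 1)) ∧
    (∀ j < k, ∀ i : Fin n, t j ≤ i.val → i.val < t (j + 1) → θ i = c j)}

/-- Circular lag-`h` squared-difference sum `T_h(x) = ∑_{i=1}^n (x_i - x_{i+h})²`,
indices taken modulo `n`. `W(θ) = Tcirc n 1 θ`. -/
def Tcirc (n h : ℕ) (x : Fin n → ℝ) : ℝ :=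
  ∑ i : Fin n, (x i - x ⟨(i.val + h) % n, Nat.mod_lt _ i.pos⟩) ^ 2

/-- A telescoping-square lemma: if a finite sequence has at most one change point,
the squared total increment equals the sum of squared one-step increments. -/
lemma seq_sq (f : ℕ → ℝ) (h : ℕ)
    (huniq : ∀ m < h, ∀ m' < h, f m ≠ f (m+1) → f m' ≠ f (m'+1) → m = m') :
    (f 0 - f h)^2 = ∑ m ∈ Finset.range h, (f m - f (m+1))^2 := by
  by_cases hex : ∃ m, m < h ∧ f m ≠ f (m+1)
  · obtain ⟨m0, hm0, hne⟩ := hex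
    have flat : ∀ m < h, m ≠ m0 → f m = f (m+1) := by
      intro m hm hne'
      by_contra hc
      exact hne' (huniq m hm m0 hm0 hc hne)
    have left : ∀ m, m ≤ m0 → f m = f 0 := by
      intro m
      induction m with
      | zero => intro _; rfl
      | succ p ih =>
        intro hm
        rw [← flat p (by omega) (by omega)]
        exact ih (by omega)
    have right : ∀ m, m0 < m → m ≤ h → f m = f (m0+1) := by
      intro m
      induction m with
      | zero => intro h1 _; omega
      | succ p ih =>
        intro h1 h2
        rcases Nat.lt_or_ge m0 p with hp | hp
        · rw [← flat p (by omega) (by omega)]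
          exact ih hp (by omega)
        · have hpe : p = m0 := by omega
          rw [hpe]
    rw [Finset.sum_eq_single_of_mem m0 (Finset.mem_range.mpr hm0)]
    · rw [left m0 le_rfl, ← right h hm0 le_rfl]
    · intro b hb hbne
      rw [flat b (Finset.mem_range.mp hb) hbne]
      ring
  · push_neg at hex
    have const : ∀ m, m ≤ h → f m = f 0 := by
      intro m
      induction m with
      | zero => intro _; rfl
      | succ p ih =>
        intro hm
        rw [← hex p (by omega)]
        exact ih (by omega)
    rw [const h le_rfl, Finset.sum_eq_zero]
    · ring
    · intro m hm
      rw [hex m (Finset.mem_range.mp hm)]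
      ring

lemma expand_sq_eq {Ω : Type*} (a : ℝ) (f g : Ω → ℝ) :
    (fun ω => (a + f ω - g ω)^2)
      = fun ω => (2*a) * f ω + ((-2*a) * g ω + (f ω * f ω
          + ((-2:ℝ) * (f ω * g ω) + (g ω * g ω + a^2)))) := by
  funext ω; ring

lemma expand_sq_int {Ω : Type*} [MeasurableSpace Ω] (μ : Measure Ω) [IsProbabilityMeasure μ]
    (a : ℝ) (f g : Ω → ℝ)
    (hf : Integrable f μ) (hg : Integrable g μ)
    (hff : Integrable (fun ω => f ω * f ω) μ)
    (hgg : Integrable (fun ω => g ω * g ω) μ)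
    (hfg : Integrable (fun ω => f ω * g ω) μ) :
    Integrable (fun ω => (a + f ω - g ω)^2) μ := by
  rw [expand_sq_eq]
  exact (hf.const_mul _).add ((hg.const_mul _).add (hff.add ((hfg.const_mul _).add
    (hgg.add (integrable_const _)))))

lemma expand_sq {Ω : Type*} [MeasurableSpace Ω] (μ : Measure Ω) [IsProbabilityMeasure μ]
    (a : ℝ) (f g : Ω → ℝ)
    (hf : Integrable f μ) (hg : Integrable g μ)
    (hff : Integrable (fun ω => f ω * f ω) μ)
    (hgg : Integrable (fun ω => g ω * g ω) μ)
    (hfg : Integrable (fun ω => f ω * g ω) μ)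
    (hmf : ∫ ω, f ω ∂μ = 0) (hmg : ∫ ω, g ω ∂μ = 0) :
    ∫ ω, (a + f ω - g ω)^2 ∂μ
      = a^2 + (∫ ω, f ω * f ω ∂μ) - 2 * (∫ ω, f ω * g ω ∂μ) + (∫ ω, g ω * g ω ∂μ) := by
  have i1 : Integrable (fun ω => (2*a) * f ω) μ := hf.const_mul _
  have i2 : Integrable (fun ω => (-2*a) * g ω) μ := hg.const_mul _
  have i4 : Integrable (fun ω => (-2:ℝ) * (f ω * g ω)) μ := hfg.const_mul _
  have i6 : Integrable (fun _ : Ω => a^2) μ := integrable_const _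
  have I5 : Integrable (fun ω => g ω * g ω + a^2) μ := hgg.add i6
  have I4 : Integrable (fun ω => (-2:ℝ) * (f ω * g ω) + (g ω * g ω + a^2)) μ := i4.add I5
  have I3 : Integrable (fun ω => f ω * f ω + ((-2:ℝ) * (f ω * g ω) + (g ω * g ω + a^2))) μ := hff.add I4
  have I2 : Integrable (fun ω => (-2*a) * g ω + (f ω * f ω + ((-2:ℝ) * (f ω * g ω) + (g ω * g ω + a^2)))) μ := i2.add I3
  rw [show (∫ ω, (a + f ω - g ω)^2 ∂μ) = ∫ ω, ((2*a) * f ω + ((-2*a) * g ω + (f ω * f ω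
        + ((-2:ℝ) * (f ω * g ω) + (g ω * g ω + a^2))))) ∂μ from by
      exact congrArg (integral μ) (expand_sq_eq a f g),
    integral_add i1 I2,
    integral_add i2 I3,
    integral_add hff I4,
    integral_add i4 I5,
    integral_add hgg i6,
    integral_const_mul, integral_const_mul, integral_const_mul,
    hmf, hmg, integral_const]
  simp only [measure_univ, ENNReal.toReal_one, probReal_univ, one_smul]
  ring

/-- Key deterministic identity: for `θ ∈ Θ_L` and `h ≤ L`, the circular lag-`h`
variation equals `h` times the lag-1 variation. -/
lemma det_key (n L h : ℕ) (hh : 1 ≤ h) (hhL : h ≤ L) (hLn : L ≤ n)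
    (θ : Fin n → ℝ) (hθ : θ ∈ ThetaSet n L) :
    Tcirc n h θ = (h:ℝ) * Tcirc n 1 θ := by
  have hn : 0 < n := by omega
  obtain ⟨k, t, c, hk, ht0, htk, hgap, hval⟩ := hθ
  set θ' : ℕ → ℝ := fun p => θ ⟨p % n, Nat.mod_lt _ hn⟩ with hθ'def
  have hmodθ : ∀ p, θ' (p % n) = θ' p := by
    intro p
    simp only [hθ'def]
    exact congrArg θ (Fin.ext (Nat.mod_mod_of_dvd p dvd_rfl))
  have hper : ∀ p, θ' (p + n) = θ' p := by
    intro p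
    simp only [hθ'def]
    exact congrArg θ (Fin.ext (Nat.add_mod_right p n))
  have hshiftmod : ∀ p q, θ' (p % n + q) = θ' (p + q) := by
    intro p q
    rw [← hmodθ (p % n + q), Nat.mod_add_mod, hmodθ]
  have tmono : ∀ j' ≤ k, ∀ j < j', t j + L ≤ t j' := by
    intro j'
    induction j' with
    | zero => intro _ j hj; omega
    | succ q ih =>
      intro hq j hj
      rcases Nat.lt_or_ge j q with h1 | h1
      · have h2 := ih (by omega) j h1
        have h3 := hgap q (by omega)
        omega
      · have : j = q := by omega
        subst this
        exact hgap j (by omega)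
  have cover : ∀ p < n, ∃ j < k, t j ≤ p ∧ p < t (j+1) := by
    intro p hp
    classical
    set j := Nat.findGreatest (fun j => t j ≤ p) k with hj
    have hjk : j ≤ k := Nat.findGreatest_le k
    have hspec : t j ≤ p := by
      rcases Nat.eq_zero_or_pos j with h0 | h0
      · rw [h0, ht0]; omega
      · exact Nat.findGreatest_spec (P := fun j => t j ≤ p) (m := 0) (Nat.zero_le k)
          (by simpa [ht0] using Nat.zero_le p)
    have hjlt : j < k := by
      rcases Nat.lt_or_ge j k with h1 | h1
      · exact h1
      · exfalso
        have : j = k := by omega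
        rw [this, htk] at hspec
        omega
    refine ⟨j, hjlt, hspec, ?_⟩
    by_contra hc
    push_neg at hc
    have := Nat.le_findGreatest (P := fun j => t j ≤ p) (by omega : j + 1 ≤ k) hc
    omega
  have bdry : ∀ p, p + 1 < n → θ' p ≠ θ' (p+1) → ∃ j, 0 < j ∧ j < k ∧ t j = p + 1 := by
    intro p hp hne
    obtain ⟨j, hjk, hle, hlt⟩ := cover p (by omega)
    have hpm : p % n = p := Nat.mod_eq_of_lt (by omega)
    have e1 : θ' p = c j := by
      simp only [hθ'def]
      exact hval j hjk _ (by simpa [hpm]) (by simpa [hpm])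
    have hp1 : t (j+1) ≤ p + 1 := by
      by_contra hc
      push_neg at hc
      have hpm1 : (p+1) % n = p + 1 := Nat.mod_eq_of_lt hp
      have e2 : θ' (p+1) = c j := by
        simp only [hθ'def]
        exact hval j hjk _ (by simp [hpm1]; omega) (by simpa [hpm1])
      exact hne (e1.trans e2.symm)
    have hte : t (j+1) = p + 1 := by omega
    refine ⟨j+1, by omega, ?_, hte⟩
    rcases Nat.lt_or_ge (j+1) k with h1 | h1
    · exact h1
    · exfalso
      have : j + 1 = k := by omega
      rw [this, htk] at hte
      omega
  have sep0 : ∀ a d : ℕ, a < n → 1 ≤ d → d < L →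
      θ' a ≠ θ' (a+1) → θ' (a+d) ≠ θ' (a+d+1) → False := by
    intro a d ha hd1 hdL hca hcb
    rcases Nat.lt_or_ge (a + d) n with hcase | hcase
    · have hb1 : a + 1 < n := by omega
      obtain ⟨j, hj0, hjk, hjt⟩ := bdry a hb1 hca
      rcases Nat.lt_or_ge (a + d + 1) n with hb2 | hb2
      · obtain ⟨j', hj'0, hj'k, hj't⟩ := bdry (a+d) hb2 hcb
        rcases lt_trichotomy j j' with hlt | heq | hgt
        · have := tmono j' (by omega) j hlt; omega
        · subst heq; omega
        · have := tmono j (by omega) j' hgt; omega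
      · have := tmono k le_rfl j hjk
        omega
    · have hbmod : θ' (a+d) = θ' (a+d-n) := by
        have e : a + d = (a + d - n) + n := by omega
        have h2 := hper (a+d-n)
        rw [← e] at h2
        exact h2
      have hbmod1 : θ' (a+d+1) = θ' (a+d-n+1) := by
        have e : a + d + 1 = (a + d - n + 1) + n := by omega
        have h2 := hper (a+d-n+1)
        rw [← e] at h2
        exact h2
      have hcb' : θ' (a+d-n) ≠ θ' (a+d-n+1) := by
        rw [← hbmod, ← hbmod1]; exact hcb
      have hb1 : a + d - n + 1 < n := by omega
      obtain ⟨j', hj'0, hj'k, hj't⟩ := bdry (a+d-n) hb1 hcb'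
      have := tmono j' (by omega) 0 hj'0
      omega
  have sep : ∀ a d : ℕ, 1 ≤ d → d < L →
      θ' a ≠ θ' (a+1) → θ' (a+d) ≠ θ' (a+d+1) → False := by
    intro a d hd1 hdL hca hcb
    refine sep0 (a % n) d (Nat.mod_lt _ hn) hd1 hdL ?_ ?_
    · rw [hmodθ, hshiftmod a 1]; exact hca
    · rw [hshiftmod a d]
      have e : a % n + d + 1 = a % n + (d + 1) := by omega
      rw [e, hshiftmod a (d+1), ← add_assoc]
      exact hcb
  have window : ∀ a : ℕ, (θ' a - θ' (a + h))^2
      = ∑ m ∈ Finset.range h, (θ' (a+m) - θ' (a+m+1))^2 := by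
    intro a
    have huniq : ∀ m < h, ∀ m' < h, θ' (a+m) ≠ θ' (a+m+1) → θ' (a+m') ≠ θ' (a+m'+1) → m = m' := by
      intro m hm m' hm' hne hne'
      by_contra hmm
      rcases Nat.lt_or_ge m m' with hlt | hge
      · refine sep (a+m) (m'-m) (by omega) (by omega) hne ?_
        have e1 : a + m + (m' - m) = a + m' := by omega
        rw [e1]
        exact hne'
      · refine sep (a+m') (m-m') (by omega) (by omega) hne' ?_
        have e1 : a + m' + (m - m') = a + m := by omega
        rw [e1]
        exact hne
    have := seq_sq (fun m => θ' (a + m)) h huniq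
    simpa [add_assoc] using this
  have hT : ∀ h' : ℕ, Tcirc n h' θ = ∑ i : Fin n, (θ' i.val - θ' (i.val + h'))^2 := by
    intro h'
    unfold Tcirc
    refine Finset.sum_congr rfl fun i _ => ?_
    have e1 : θ i = θ' i.val := by
      simp only [hθ'def]
      exact congrArg θ (Fin.ext (Nat.mod_eq_of_lt i.isLt).symm)
    have e2 : θ ⟨(i.val + h') % n, Nat.mod_lt _ i.pos⟩ = θ' (i.val + h') := rfl
    rw [e1, e2]
  haveI : NeZero n := ⟨by omega⟩
  have hshift : ∀ (g : ℕ → ℝ), (∀ p, g (p % n) = g p) →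
      ∀ m : ℕ, ∑ i : Fin n, g (i.val + m) = ∑ i : Fin n, g i.val := by
    intro g hg m
    calc ∑ i : Fin n, g (i.val + m)
        = ∑ i : Fin n, g ((i + (⟨m % n, Nat.mod_lt _ hn⟩ : Fin n)).val) := by
          refine Finset.sum_congr rfl fun i _ => ?_
          rw [← hg (i.val + m)]
          congr 1
          simp only [Fin.add_def]
          conv_lhs => rw [Nat.add_mod]
          conv_rhs => rw [Nat.add_mod, Nat.mod_mod_of_dvd m dvd_rfl]
      _ = ∑ i : Fin n, g i.val :=
          Equiv.sum_comp (Equiv.addRight (⟨m % n, Nat.mod_lt _ hn⟩ : Fin n)) (fun i : Fin n => g i.val)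
  have hgmod : ∀ p, (θ' (p % n) - θ' (p % n + 1))^2 = (θ' p - θ' (p+1))^2 := by
    intro p
    rw [hmodθ, hshiftmod p 1]
  calc Tcirc n h θ = ∑ i : Fin n, (θ' i.val - θ' (i.val + h))^2 := hT h
    _ = ∑ i : Fin n, ∑ m ∈ Finset.range h, (θ' (i.val+m) - θ' (i.val+m+1))^2 :=
        Finset.sum_congr rfl fun i _ => window i.val
    _ = ∑ m ∈ Finset.range h, ∑ i : Fin n, (θ' (i.val+m) - θ' (i.val+m+1))^2 :=
        Finset.sum_comm
    _ = ∑ m ∈ Finset.range h, ∑ i : Fin n, (θ' i.val - θ' (i.val+1))^2 := by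
        refine Finset.sum_congr rfl fun m _ => ?_
        have := hshift (fun p => (θ' p - θ' (p+1))^2) hgmod m
        simpa using this
    _ = (h:ℝ) * ∑ i : Fin n, (θ' i.val - θ' (i.val+1))^2 := by
        rw [Finset.sum_const, nsmul_eq_mul, Finset.card_range]
    _ = (h:ℝ) * Tcirc n 1 θ := by rw [hT 1]

/-- For `1 ≤ h ≤ L ≤ n`, `θ ∈ Θ_L` and `ε` mean-zero with stationary
covariances, `E[T_h] = h·W(θ) + 2n·γ_0 − 2(n−h)·γ_h − 2h·γ_{n-h}`. -/
theorem stmt_6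
    {Ω : Type*} [MeasurableSpace Ω] (μ : Measure Ω) [IsProbabilityMeasure μ]
    (n L h : ℕ) (hh : 1 ≤ h) (hhL : h ≤ L) (hLn : L ≤ n)
    (γ : ℕ → ℝ) (θ : Fin n → ℝ) (hθ : θ ∈ ThetaSet n L)
    (ε : Fin n → Ω → ℝ)
    (hint : ∀ i, Integrable (ε i) μ)
    (hint2 : ∀ i j, Integrable (fun ω => ε i ω * ε j ω) μ)
    (hmean : ∀ i, ∫ ω, ε i ω ∂μ = 0)
    (hcov : ∀ i j : Fin n, ∫ ω, ε i ω * ε j ω ∂μ = γ ((i.val : ℤ) - (j.val : ℤ)).natAbs) :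
    ∫ ω, Tcirc n h (fun i => θ i + ε i ω) ∂μ
      = (h : ℝ) * Tcirc n 1 θ + 2 * (n : ℝ) * γ 0
        - 2 * ((n : ℝ) - (h : ℝ)) * γ h - 2 * (h : ℝ) * γ (n - h) := by
  have hn : 0 < n := by omega
  have hhn : h ≤ n := le_trans hhL hLn
  have hTerm : ∀ i j : Fin n, ∫ ω, (θ i + ε i ω - (θ j + ε j ω))^2 ∂μ
      = (θ i - θ j)^2 + 2 * γ 0 - 2 * γ (((i.val:ℤ) - (j.val:ℤ)).natAbs) := by
    intro i j
    have hcongr : ∫ ω, (θ i + ε i ω - (θ j + ε j ω))^2 ∂μ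
        = ∫ ω, ((θ i - θ j) + ε i ω - ε j ω)^2 ∂μ := by
      refine integral_congr_ae (Filter.Eventually.of_forall fun ω => ?_)
      ring
    rw [hcongr, expand_sq μ _ _ _ (hint i) (hint j) (hint2 i i) (hint2 j j) (hint2 i j)
        (hmean i) (hmean j), hcov i i, hcov j j, hcov i j]
    simp only [sub_self, Int.natAbs_zero]
    ring
  have hInt : ∀ i j : Fin n, Integrable (fun ω => (θ i + ε i ω - (θ j + ε j ω))^2) μ := by
    intro i j
    exact (expand_sq_int μ (θ i - θ j) (ε i) (ε j) (hint i) (hint j) (hint2 i i) (hint2 j j)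
      (hint2 i j)).congr (Filter.Eventually.of_forall fun ω => by ring)
  have hstep : ∫ ω, Tcirc n h (fun i => θ i + ε i ω) ∂μ
      = ∑ i : Fin n, ((θ i - θ ⟨(i.val + h) % n, Nat.mod_lt _ i.pos⟩)^2 + 2 * γ 0
          - 2 * γ (((i.val:ℤ) - (((⟨(i.val + h) % n, Nat.mod_lt _ i.pos⟩ : Fin n).val:ℤ))).natAbs)) := by
    simp only [Tcirc]
    rw [integral_finset_sum _ (fun i _ => hInt i _)]
    exact Finset.sum_congr rfl fun i _ => hTerm i _
  have hD : ∀ i : Fin n, (((i.val:ℤ) - (((⟨(i.val + h) % n, Nat.mod_lt _ i.pos⟩ : Fin n).val:ℤ))).natAbs)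
      = if i.val + h < n then h else n - h := by
    intro i
    have hi := i.isLt
    show (((i.val:ℤ) - (((i.val + h) % n : ℕ):ℤ)).natAbs) = _
    rcases Nat.lt_or_ge (i.val + h) n with hc | hc
    · rw [if_pos hc, Nat.mod_eq_of_lt hc]
      omega
    · rw [if_neg (by omega), Nat.mod_eq_sub_mod hc, Nat.mod_eq_of_lt (by omega)]
      omega
  have key : ∑ i : Fin n, γ (if i.val + h < n then h else n - h)
      = ((n - h : ℕ) : ℝ) * γ h + (h : ℝ) * γ (n - h) := by
    rw [show (∑ i : Fin n, γ (if i.val + h < n then h else n - h))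
        = ∑ m ∈ Finset.range n, γ (if m + h < n then h else n - h) from
      Fin.sum_univ_eq_sum_range (fun m => γ (if m + h < n then h else n - h)) n]
    rw [Finset.range_eq_Ico, ← Finset.sum_Ico_consecutive _ (Nat.zero_le (n-h)) (by omega : n - h ≤ n)]
    have e1 : ∑ m ∈ Finset.Ico 0 (n-h), γ (if m + h < n then h else n - h)
        = ∑ _m ∈ Finset.Ico 0 (n-h), γ h := by
      refine Finset.sum_congr rfl fun m hm => ?_
      simp only [Finset.mem_Ico] at hm
      rw [if_pos (by omega)]
    have e2 : ∑ m ∈ Finset.Ico (n-h) n, γ (if m + h < n then h else n - h)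
        = ∑ _m ∈ Finset.Ico (n-h) n, γ (n - h) := by
      refine Finset.sum_congr rfl fun m hm => ?_
      simp only [Finset.mem_Ico] at hm
      rw [if_neg (by omega)]
    rw [e1, e2, Finset.sum_const, Finset.sum_const, Nat.card_Ico, Nat.card_Ico,
        nsmul_eq_mul, nsmul_eq_mul]
    have e3 : n - (n - h) = h := by omega
    rw [e3, Nat.sub_zero]
  rw [hstep]
  calc ∑ i : Fin n, ((θ i - θ ⟨(i.val + h) % n, Nat.mod_lt _ i.pos⟩)^2 + 2 * γ 0
          - 2 * γ (((i.val:ℤ) - (((⟨(i.val + h) % n, Nat.mod_lt _ i.pos⟩ : Fin n).val:ℤ))).natAbs))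
      = ∑ i : Fin n, ((θ i - θ ⟨(i.val + h) % n, Nat.mod_lt _ i.pos⟩)^2 + 2 * γ 0
          - 2 * γ (if i.val + h < n then h else n - h)) := by
        refine Finset.sum_congr rfl fun i _ => ?_
        rw [hD i]
    _ = (∑ i : Fin n, (θ i - θ ⟨(i.val + h) % n, Nat.mod_lt _ i.pos⟩)^2)
        + (n : ℝ) * (2 * γ 0) - 2 * ∑ i : Fin n, γ (if i.val + h < n then h else n - h) := by
        rw [Finset.sum_sub_distrib, Finset.sum_add_distrib, Finset.sum_const, Finset.card_univ,
          Fintype.card_fin, nsmul_eq_mul, ← Finset.mul_sum]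
    _ = (h : ℝ) * Tcirc n 1 θ + 2 * (n : ℝ) * γ 0
        - 2 * ((n : ℝ) - (h : ℝ)) * γ h - 2 * (h : ℝ) * γ (n - h) := by
        have hdet : (∑ i : Fin n, (θ i - θ ⟨(i.val + h) % n, Nat.mod_lt _ i.pos⟩)^2)
            = Tcirc n h θ := rfl
        rw [hdet, det_key n L h hh hhL hLn θ hθ, key, Nat.cast_sub hhn]
        ring
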